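/- Let R be a commutative ring with sfli R < ∞ (the supremum of flat dimensions of injective R-modules is finite) and let G be a group. Then every projectively coresolved Gorenstein flat (PGF) RG-module is PGF as an R-module. -/

import Mathlib

universe u v

open Function

section NCTensor

variable (S : Type u) [Ring S]

/-- The balancing relations for the tensor product `I ⊗_S M` of a right `S`-module `I`
with a left `S`-module `M`, inside `I ⊗_ℤ M`. -/
def ncRel (I : Type u) [AddCommGroup I] [Module Sᵐᵒᵖ I]
    (M : Type u) [AddCommGroup M] [Module S M] : Submodule ℤ (TensorProduct ℤ I M) :=
  Submodule.span ℤ {z | ∃ (x : I) (s : S) (m : M),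
    z = (MulOpposite.op s • x) ⊗ₜ[ℤ] m - x ⊗ₜ[ℤ] (s • m)}

/-- The tensor product `I ⊗_S M` of a right `S`-module `I` with a left `S`-module `M`
(as an abelian group). -/
def NCT (I : Type u) [AddCommGroup I] [Module Sᵐᵒᵖ I]
    (M : Type u) [AddCommGroup M] [Module S M] : Type u :=
  TensorProduct ℤ I M ⧸ ncRel S I M

noncomputable instance (I : Type u) [AddCommGroup I] [Module Sᵐᵒᵖ I]
    (M : Type u) [AddCommGroup M] [Module S M] : AddCommGroup (NCT S I M) :=
  inferInstanceAs (AddCommGroup (TensorProduct ℤ I M ⧸ ncRel S I M))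

/-- The map `I ⊗_S M → I ⊗_S N` induced by an `S`-linear map `f : M → N`. -/
noncomputable def nctMap (I : Type u) [AddCommGroup I] [Module Sᵐᵒᵖ I]
    {M N : Type u} [AddCommGroup M] [Module S M] [AddCommGroup N] [Module S N]
    (f : M →ₗ[S] N) : NCT S I M →ₗ[ℤ] NCT S I N :=
  Submodule.mapQ _ _ (LinearMap.lTensor I f.toAddMonoidHom.toIntLinearMap) (by
    apply Submodule.span_le.2
    rintro z ⟨x, s, m, rfl⟩
    have hmem : (LinearMap.lTensor I f.toAddMonoidHom.toIntLinearMap)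
        ((MulOpposite.op s • x) ⊗ₜ[ℤ] m - x ⊗ₜ[ℤ] (s • m)) ∈ ncRel S I N := by
      rw [map_sub, LinearMap.lTensor_tmul, LinearMap.lTensor_tmul]
      have h2 : f.toAddMonoidHom.toIntLinearMap (s • m) = s • f m := f.map_smul s m
      rw [h2]
      exact Submodule.subset_span ⟨x, s, f m, rfl⟩
    exact hmem)

end NCTensor

section Complexes

variable (S : Type u) [Ring S]

/-- A `ℤ`-indexed sequence of `S`-modules with maps `X (n+1) → X n`. -/
structure ZComplex where
  X : ℤ → Type u
  [addX : ∀ n, AddCommGroup (X n)]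
  [modX : ∀ n, Module S (X n)]
  d : ∀ n : ℤ, X (n + 1) →ₗ[S] X n

attribute [instance] ZComplex.addX ZComplex.modX

/-- `M` is a projectively coresolved Gorenstein flat (PGF) `S`-module: a syzygy of an acyclic
complex of projective `S`-modules which remains acyclic after tensoring with every injective
right `S`-module. -/
def IsPGF (M : Type u) [AddCommGroup M] [Module S M] : Prop :=
  ∃ P : ZComplex S,
    (∀ n, Module.Projective S (P.X n)) ∧
    (∀ n, Function.Exact (P.d (n + 1)) (P.d n)) ∧
    (∀ (I : Type u) [AddCommGroup I] [Module Sᵐᵒᵖ I], Module.Injective Sᵐᵒᵖ I →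
      ∀ n, Function.Exact (nctMap S I (P.d (n + 1))) (nctMap S I (P.d n))) ∧
    Nonempty ((LinearMap.range (P.d 0)) ≃ₗ[S] M)

/-- `M` is a Gorenstein projective `S`-module: a syzygy of an acyclic complex of projective
`S`-modules which stays acyclic under `Hom_S(-, Q)` for every projective `S`-module `Q`. -/
def IsGorensteinProjective (M : Type u) [AddCommGroup M] [Module S M] : Prop :=
  ∃ P : ZComplex S,
    (∀ n, Module.Projective S (P.X n)) ∧
    (∀ n, Function.Exact (P.d (n + 1)) (P.d n)) ∧
    (∀ (Q : Type u) [AddCommGroup Q] [Module S Q], Module.Projective S Q →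
      ∀ n, Function.Exact (fun φ : P.X n →ₗ[S] Q => φ.comp (P.d n))
        (fun ψ : P.X (n + 1) →ₗ[S] Q => ψ.comp (P.d (n + 1)))) ∧
    Nonempty ((LinearMap.range (P.d 0)) ≃ₗ[S] M)

/-- A (left) resolution of the `S`-module `M`. -/
structure NatRes (M : Type u) [AddCommGroup M] [Module S M] where
  F : ℕ → Type u
  [addF : ∀ n, AddCommGroup (F n)]
  [modF : ∀ n, Module S (F n)]
  d : ∀ n : ℕ, F (n + 1) →ₗ[S] F n
  aug : F 0 →ₗ[S] M
  surj : Function.Surjective aug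
  exact0 : Function.Exact (d 0) aug
  exact : ∀ n, Function.Exact (d (n + 1)) (d n)

attribute [instance] NatRes.addF NatRes.modF

/-- A class of `S`-modules. -/
def ModClass : Type (u + 1) :=
  ∀ (N : Type u) [AddCommGroup N] [Module S N], Prop

/-- `M` admits a resolution of length at most `n` by modules in the class `C`. -/
def HasResLen (C : ModClass S) (M : Type u) [AddCommGroup M] [Module S M] (n : ℕ) : Prop :=
  ∃ ρ : NatRes S M, (∀ i, C (ρ.F i)) ∧ ∀ i, n < i → ∀ x : ρ.F i, x = 0

/-- The resolution dimension of `M` with respect to the class `C`, as an element of `ℕ∞`. -/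
noncomputable def classDim (C : ModClass S) (M : Type u) [AddCommGroup M] [Module S M] : ℕ∞ :=
  sInf {e : ℕ∞ | ∃ n : ℕ, e = n ∧ HasResLen S C M n}

/-- The class of projective `S`-modules. -/
def projClass : ModClass S := fun N _ _ => Module.Projective S N

/-- The class of PGF `S`-modules. -/
def pgfClass : ModClass S := fun N _ _ => IsPGF S N

/-- The projective dimension of `M` as an element of `ℕ∞`. -/
noncomputable def projDim (M : Type u) [AddCommGroup M] [Module S M] : ℕ∞ :=
  classDim S (projClass S) M

/-- The PGF dimension of `M` as an element of `ℕ∞`. -/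
noncomputable def pgfDim (M : Type u) [AddCommGroup M] [Module S M] : ℕ∞ :=
  classDim S (pgfClass S) M

/-- A bundled injective `S`-module. -/
structure InjMod where
  carrier : Type u
  [addC : AddCommGroup carrier]
  [modC : Module S carrier]
  inj : Module.Injective S carrier

attribute [instance] InjMod.addC InjMod.modC

/-- `spli S`: the supremum of the projective dimensions of injective `S`-modules. -/
noncomputable def spli : ℕ∞ :=
  sSup (Set.range fun I : InjMod S => projDim S I.carrier)

end Complexes

section Sfli

variable (R : Type u) [CommRing R]

/-- The class of flat `R`-modules. -/
def flatClass : ModClass R := fun N _ _ => Module.Flat R N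

/-- The flat dimension of `M` as an element of `ℕ∞`. -/
noncomputable def flatDim (M : Type u) [AddCommGroup M] [Module R M] : ℕ∞ :=
  classDim R (flatClass R) M

/-- `sfli R`: the supremum of the flat dimensions of injective `R`-modules. -/
noncomputable def sfli : ℕ∞ :=
  sSup (Set.range fun I : InjMod R => flatDim R I.carrier)

end Sfli

section Trivial

variable (R : Type u) [CommRing R] (G : Type u) [Group G]

/-- The augmentation `R`-algebra map `R[G] → R`. -/
noncomputable def augmentation : MonoidAlgebra R G →ₐ[R] R :=
  MonoidAlgebra.lift R R G 1

end Trivial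

/-- The trivial `R[G]`-module `R`. -/
def Triv (R : Type u) (G : Type u) : Type u := R

section Trivial2

variable (R : Type u) [CommRing R] (G : Type u) [Group G]

instance : AddCommGroup (Triv R G) := inferInstanceAs (AddCommGroup R)

instance : Module R (Triv R G) := inferInstanceAs (Module R R)

noncomputable instance : Module (MonoidAlgebra R G) (Triv R G) :=
  Module.compHom R (augmentation R G).toRingHom

instance : IsScalarTower R (MonoidAlgebra R G) (Triv R G) :=
  ⟨fun r x m => by
    show (augmentation R G) (r • x) • m = r • ((augmentation R G) x • m)
    rw [map_smul]
    exact mul_smul r ((augmentation R G) x) m⟩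

/-- The PGF dimension of the group `G` over `R`: the PGF dimension of the trivial
`R[G]`-module `R`. -/
noncomputable def pgfGroupDim : ℕ∞ :=
  pgfDim (MonoidAlgebra R G) (Triv R G)

end Trivial2


section AuxOp

open MulOpposite

variable {R : Type u} [CommRing R]

/-- The canonical ring hom `R →+* Rᵐᵒᵖ` for a commutative ring. -/
def auxOpHom (R : Type u) [CommRing R] : R →+* Rᵐᵒᵖ :=
  RingHom.toOpposite (RingHom.id R) fun x y => mul_comm x y

/-- The canonical ring hom `Rᵐᵒᵖ →+* R` for a commutative ring. -/
def auxUnopHom (R : Type u) [CommRing R] : Rᵐᵒᵖ →+* R :=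
  RingHom.fromOpposite (RingHom.id R) fun x y => mul_comm x y

theorem aux_injective_of_op (I : Type u) [AddCommGroup I] [Module Rᵐᵒᵖ I]
    (h : Module.Injective Rᵐᵒᵖ I) :
    letI := Module.compHom I (auxOpHom R); Module.Injective R I := by
  letI := Module.compHom I (auxOpHom R)
  constructor
  intro X Y _ _ _ _ f hf g
  letI mX : Module Rᵐᵒᵖ X := Module.compHom X (auxUnopHom R)
  letI mY : Module Rᵐᵒᵖ Y := Module.compHom Y (auxUnopHom R)
  let f' : X →ₗ[Rᵐᵒᵖ] Y :=
    { toFun := f, map_add' := f.map_add,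
      map_smul' := fun s x => f.map_smul (unop s) x }
  let g' : X →ₗ[Rᵐᵒᵖ] I :=
    { toFun := g, map_add' := g.map_add,
      map_smul' := fun s x => by
        show g (unop s • x) = s • g x
        rw [g.map_smul]
        rfl }
  obtain ⟨h', hh'⟩ := h.out f' hf g'
  exact ⟨{ toFun := h', map_add' := h'.map_add,
           map_smul' := fun r y => h'.map_smul (op r) y }, hh'⟩

end AuxOp

section AuxNCT

open MulOpposite TensorProduct LinearMap

variable (R : Type u) [CommRing R]
variable (I : Type u) [AddCommGroup I] [Module Rᵐᵒᵖ I] [Module R I]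

/-- the bilinear tmul as an `AddMonoidHom`. -/
noncomputable def auxTmulHom (M : Type u) [AddCommGroup M] [Module R M] :
    I →+ M →+ I ⊗[R] M :=
  AddMonoidHom.mk' (fun x => AddMonoidHom.mk' (fun m => x ⊗ₜ[R] m) (tmul_add x))
    (fun x y => AddMonoidHom.ext fun m => add_tmul x y m)

variable (hc : ∀ (r : R) (x : I), r • x = op r • x)

/-- From `I ⊗_ℤ M` to `I ⊗_R M`. -/
noncomputable def auxToTensorAux (M : Type u) [AddCommGroup M] [Module R M] :
    (TensorProduct ℤ I M) →+ I ⊗[R] M :=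
  TensorProduct.liftAddHom (auxTmulHom R I M) (fun z x m => by
    show auxTmulHom R I M (z • x) m = auxTmulHom R I M x (z • m)
    rw [AddMonoidHom.map_zsmul, (auxTmulHom R I M x).map_zsmul]
    rfl)

@[simp] theorem auxToTensorAux_tmul (M : Type u) [AddCommGroup M] [Module R M]
    (x : I) (m : M) : auxToTensorAux R I M (x ⊗ₜ[ℤ] m) = x ⊗ₜ[R] m :=
  TensorProduct.liftAddHom_tmul _ _ _ _

/-- From `NCT R I M` to `I ⊗_R M`. -/
noncomputable def auxToTensor (M : Type u) [AddCommGroup M] [Module R M] :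
    NCT R I M →ₗ[ℤ] I ⊗[R] M :=
  Submodule.liftQ _ (auxToTensorAux R I M).toIntLinearMap (by
    apply Submodule.span_le.2
    rintro z ⟨x, s, m, rfl⟩
    simp only [SetLike.mem_coe, LinearMap.mem_ker, map_sub,
      AddMonoidHom.coe_toIntLinearMap, auxToTensorAux_tmul]
    rw [← hc s x, smul_tmul]
    simp)

@[simp] theorem auxToTensor_mk (M : Type u) [AddCommGroup M] [Module R M]
    (x : I) (m : M) :
    auxToTensor R I hc M (Submodule.Quotient.mk (x ⊗ₜ[ℤ] m)) = x ⊗ₜ[R] m := by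
  show (auxToTensorAux R I M).toIntLinearMap (x ⊗ₜ[ℤ] m) = x ⊗ₜ[R] m
  exact auxToTensorAux_tmul R I M x m

/-- From `I ⊗_R M` to `NCT R I M`. -/
noncomputable def auxToNCT (M : Type u) [AddCommGroup M] [Module R M] :
    I ⊗[R] M →+ NCT R I M :=
  TensorProduct.liftAddHom
    (AddMonoidHom.mk' (fun x => AddMonoidHom.mk'
        (fun m => (Submodule.Quotient.mk (x ⊗ₜ[ℤ] m) : NCT R I M))
        (fun m₁ m₂ => by
          show (Submodule.Quotient.mk (x ⊗ₜ[ℤ] (m₁ + m₂)) : NCT R I M) = _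
          rw [tmul_add, Submodule.Quotient.mk_add]; rfl))
      (fun x y => AddMonoidHom.ext fun m => by
        show (Submodule.Quotient.mk (((x + y) ⊗ₜ[ℤ] m)) : NCT R I M) = _
        rw [add_tmul, Submodule.Quotient.mk_add]
        rfl))
    (fun r x m => by
      show (Submodule.Quotient.mk ((r • x) ⊗ₜ[ℤ] m) : NCT R I M) =
        Submodule.Quotient.mk (x ⊗ₜ[ℤ] (r • m))
      rw [Submodule.Quotient.eq]
      exact Submodule.subset_span ⟨x, r, m, by rw [← hc]⟩)

@[simp] theorem auxToNCT_tmul (M : Type u) [AddCommGroup M] [Module R M]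
    (x : I) (m : M) :
    auxToNCT R I hc M (x ⊗ₜ[R] m) = (Submodule.Quotient.mk (x ⊗ₜ[ℤ] m) : NCT R I M) :=
  TensorProduct.liftAddHom_tmul _ _ _ _

theorem auxToTensor_toNCT (M : Type u) [AddCommGroup M] [Module R M]
    (t : I ⊗[R] M) : auxToTensor R I hc M (auxToNCT R I hc M t) = t := by
  induction t with
  | zero => simp
  | tmul x m => simp
  | add a b ha hb => rw [map_add, map_add, ha, hb]

theorem auxToNCT_toTensor (M : Type u) [AddCommGroup M] [Module R M]
    (z : NCT R I M) : auxToNCT R I hc M (auxToTensor R I hc M z) = z := by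
  obtain ⟨w, rfl⟩ := Submodule.Quotient.mk_surjective _ z
  induction w with
  | zero => exact (congrArg (auxToNCT R I hc M) (map_zero (auxToTensor R I hc M))).trans (map_zero _)
  | tmul x m => simp; rfl
  | add a b ha hb =>
      refine (map_add ((auxToNCT R I hc M).comp (auxToTensor R I hc M).toAddMonoidHom)
        (Submodule.Quotient.mk a : NCT R I M) (Submodule.Quotient.mk b)).trans ?_
      exact congrArg₂ (· + ·) ha hb

theorem auxToTensor_surjective (M : Type u) [AddCommGroup M] [Module R M] :
    Function.Surjective (auxToTensor R I hc M) :=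
  fun t => ⟨auxToNCT R I hc M t, auxToTensor_toNCT R I hc M t⟩

theorem auxToTensor_injective (M : Type u) [AddCommGroup M] [Module R M] :
    Function.Injective (auxToTensor R I hc M) :=
  Function.LeftInverse.injective (auxToNCT_toTensor R I hc M)

theorem auxToTensor_natural {M N : Type u} [AddCommGroup M] [Module R M]
    [AddCommGroup N] [Module R N] (f : M →ₗ[R] N) (z : NCT R I M) :
    auxToTensor R I hc N (nctMap R I f z) = lTensor I f (auxToTensor R I hc M z) := by
  obtain ⟨w, rfl⟩ := Submodule.Quotient.mk_surjective _ z
  rw [show nctMap R I f (Submodule.Quotient.mk w) =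
      Submodule.Quotient.mk (LinearMap.lTensor I f.toAddMonoidHom.toIntLinearMap w) from
    Submodule.mapQ_apply _ _ _ w]
  induction w with
  | zero => exact (map_zero (auxToTensor R I hc N)).trans ((map_zero (lTensor I f)).symm.trans
      (congrArg (lTensor I f) (map_zero (auxToTensor R I hc M)).symm))
  | tmul x m => simp
  | add a b ha hb =>
      rw [map_add, Submodule.Quotient.mk_add]
      refine (map_add (auxToTensor R I hc N) (Submodule.Quotient.mk _ : NCT R I N)
        (Submodule.Quotient.mk _)).trans ?_
      exact (congrArg₂ (· + ·) ha hb).trans <| (map_add (lTensor I f) _ _).symm.trans (congrArg (lTensor I f)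
        (map_add (auxToTensor R I hc M) (Submodule.Quotient.mk a : NCT R I M)
          (Submodule.Quotient.mk b)).symm)

end AuxNCT

section AuxHomology

open LinearMap TensorProduct

/-- Transfer exactness across additive bijections. -/
theorem aux_exact_transfer {A B C A' B' C' : Type*}
    [AddCommGroup A] [AddCommGroup B] [AddCommGroup C]
    [AddCommGroup A'] [AddCommGroup B'] [AddCommGroup C']
    (f : A → B) (g : B → C) (f' : A' → B') (g' : B' → C')
    (eA : A →+ A') (eB : B →+ B') (eC : C →+ C')
    (sA : Function.Surjective eA) (iB : Function.Injective eB)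
    (iC : Function.Injective eC)
    (hf : ∀ a, eB (f a) = f' (eA a)) (hg : ∀ b, eC (g b) = g' (eB b))
    (h : Function.Exact f' g') : Function.Exact f g := by
  intro b
  constructor
  · intro hb
    have h0 : g' (eB b) = 0 := by rw [← hg, hb, map_zero]
    obtain ⟨a', ha'⟩ := (h (eB b)).1 h0
    obtain ⟨a, rfl⟩ := sA a'
    exact ⟨a, iB (by rw [hf, ha'])⟩
  · rintro ⟨a, rfl⟩
    have h2 : eC (g (f a)) = 0 := by rw [hg, hf]; exact h.apply_apply_eq_zero (eA a)
    apply iC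
    rw [h2, map_zero]

variable {R : Type u} [CommRing R]

/-- The "two out of three" lemma for tensored complexes. -/
theorem aux_snake (P : ZComplex R) (hX : ∀ m, Module.Flat R (P.X m))
    (hP : ∀ m, Function.Exact (P.d (m + 1)) (P.d m))
    {K F W : Type u} [AddCommGroup K] [Module R K] [AddCommGroup F] [Module R F]
    [AddCommGroup W] [Module R W] [Module.Flat R F]
    (ι : K →ₗ[R] F) (π : F →ₗ[R] W) (hι : Function.Injective ι)
    (hπ : Function.Surjective π) (hexact : Function.Exact ι π)
    (hK : ∀ m, Function.Exact (lTensor K (P.d (m + 1))) (lTensor K (P.d m))) (m : ℤ) :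
    Function.Exact (lTensor W (P.d (m + 1))) (lTensor W (P.d m)) := by
  obtain ⟨j, rfl⟩ : ∃ j, m = j + 1 := ⟨m - 1, by omega⟩
  have hP' : Function.Exact (P.d (j + 1)) (P.d j) := hP j
  have hK' : Function.Exact (lTensor K (P.d (j + 1))) (lTensor K (P.d j)) := hK j
  have hdd : (P.d j) ∘ₗ (P.d (j + 1)) = 0 :=
    LinearMap.ext fun x => hP'.apply_apply_eq_zero x
  have hdd' : (P.d (j + 1)) ∘ₗ (P.d (j + 1 + 1)) = 0 :=
    LinearMap.ext fun x => (hP (j + 1)).apply_apply_eq_zero x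
  have hπι : π ∘ₗ ι = 0 := LinearMap.ext fun x => hexact.apply_apply_eq_zero x
  intro t
  constructor
  · intro ht
    obtain ⟨b, rfl⟩ := rTensor_surjective (P.X (j + 1 + 1)) hπ t
    have e1 : rTensor (P.X (j + 1)) π (lTensor F (P.d (j + 1)) b) = 0 := by
      rw [← LinearMap.comp_apply, rTensor_comp_lTensor, ← lTensor_comp_rTensor,
        LinearMap.comp_apply, ht]
    obtain ⟨a, ha⟩ := (rTensor_exact (P.X (j + 1)) hexact hπ (lTensor F (P.d (j + 1)) b)).1 e1
    have e2 : lTensor K (P.d j) a = 0 := by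
      apply Module.Flat.rTensor_preserves_injective_linearMap (M := P.X j) ι hι
      rw [map_zero, ← LinearMap.comp_apply, rTensor_comp_lTensor, ← lTensor_comp_rTensor,
        LinearMap.comp_apply, ha, ← LinearMap.comp_apply, ← lTensor_comp, hdd,
        lTensor_zero, LinearMap.zero_apply]
    obtain ⟨a', ha'⟩ := (hK' a).1 e2
    set b₂ := b - rTensor (P.X (j + 1 + 1)) ι a' with hb₂
    have e3 : lTensor F (P.d (j + 1)) b₂ = 0 := by
      rw [hb₂, map_sub, ← LinearMap.comp_apply, lTensor_comp_rTensor, ← rTensor_comp_lTensor,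
        LinearMap.comp_apply, ha', ha, sub_self]
    obtain ⟨c, hc⟩ := (Module.Flat.lTensor_exact F (hP (j + 1)) b₂).1 e3
    refine ⟨rTensor (P.X (j + 1 + 1 + 1)) π c, ?_⟩
    have e4 : rTensor (P.X (j + 1 + 1)) π b₂ = rTensor (P.X (j + 1 + 1)) π b := by
      rw [hb₂, map_sub, ← LinearMap.comp_apply, ← rTensor_comp, hπι, rTensor_zero,
        LinearMap.zero_apply, sub_zero]
    rw [← LinearMap.comp_apply, lTensor_comp_rTensor, ← rTensor_comp_lTensor,
      LinearMap.comp_apply, hc, e4]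
  · rintro ⟨u, rfl⟩
    rw [← LinearMap.comp_apply, ← lTensor_comp, hdd', lTensor_zero, LinearMap.zero_apply]

/-- A module with a finite-length flat resolution tensors acyclic complexes of flats
to acyclic complexes. -/
theorem aux_acyclic_of_hasResLen (P : ZComplex R) (hX : ∀ m, Module.Flat R (P.X m))
    (hP : ∀ m, Function.Exact (P.d (m + 1)) (P.d m)) :
    ∀ n : ℕ, ∀ (W : Type u) [AddCommGroup W] [Module R W],
      HasResLen R (flatClass R) W n →
      ∀ m : ℤ, Function.Exact (lTensor W (P.d (m + 1))) (lTensor W (P.d m)) := by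
  intro n
  induction n with
  | zero =>
    intro W _ _ ⟨ρ, hflat, hvan⟩ m
    haveI : Module.Flat R (ρ.F 0) := hflat 0
    -- K := range of d 0 is trivial
    have hKtriv : ∀ y : LinearMap.range (ρ.d 0), y = 0 := by
      rintro ⟨y, x, rfl⟩
      have : x = 0 := hvan 1 (by omega) x
      simp [this]
    have hKsub : ∀ (m' : ℤ) (t : (LinearMap.range (ρ.d 0)) ⊗[R] (P.X m')), t = 0 := by
      intro m' t
      induction t with
      | zero => rfl
      | tmul k x => rw [hKtriv k, zero_tmul]
      | add a b ha hb => rw [ha, hb, add_zero]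
    refine aux_snake P hX hP (LinearMap.range (ρ.d 0)).subtype ρ.aug
      (Submodule.injective_subtype _) ρ.surj ?_ ?_ m
    · intro y
      rw [ρ.exact0 y]
      constructor
      · rintro ⟨x, rfl⟩; exact ⟨⟨ρ.d 0 x, ⟨x, rfl⟩⟩, rfl⟩
      · rintro ⟨⟨y', x, rfl⟩, rfl⟩; exact ⟨x, rfl⟩
    · intro m' t
      constructor
      · intro _
        exact ⟨0, by rw [map_zero]; exact (hKsub _ t).symm⟩
      · intro _
        rw [hKsub _ t, map_zero]
  | succ n ih =>
    intro W _ _ ⟨ρ, hflat, hvan⟩ m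
    haveI : Module.Flat R (ρ.F 0) := hflat 0
    have hres : HasResLen R (flatClass R) (LinearMap.range (ρ.d 0)) n := by
      refine ⟨{ F := fun i => ρ.F (i + 1)
                d := fun i => ρ.d (i + 1)
                aug := (ρ.d 0).rangeRestrict
                surj := LinearMap.surjective_rangeRestrict _
                exact0 := by
                  intro y
                  rw [← ρ.exact 0 y]
                  constructor
                  · intro h; exact congrArg Subtype.val h
                  · intro h; exact Subtype.ext h
                exact := fun i => ρ.exact (i + 1) }, fun i => hflat (i + 1),
        fun i hi x => hvan (i + 1) (by omega) x⟩
    refine aux_snake P hX hP (LinearMap.range (ρ.d 0)).subtype ρ.aug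
      (Submodule.injective_subtype _) ρ.surj ?_ (ih _ hres) m
    · intro y
      rw [ρ.exact0 y]
      constructor
      · rintro ⟨x, rfl⟩; exact ⟨⟨ρ.d 0 x, ⟨x, rfl⟩⟩, rfl⟩
      · rintro ⟨⟨y', x, rfl⟩, rfl⟩; exact ⟨x, rfl⟩

end AuxHomology

section AuxRest

open LinearMap TensorProduct

theorem aux_hasResLen_of_sfli {R : Type u} [CommRing R] (h : sfli R < ⊤)
    (I : Type u) [AddCommGroup I] [Module R I] (hI : Module.Injective R I) :
    ∃ n : ℕ, HasResLen R (flatClass R) I n := by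
  have hle : flatDim R I ≤ sfli R :=
    le_sSup (Set.mem_range_self (⟨I, hI⟩ : InjMod R))
  have hlt : flatDim R I < ⊤ := lt_of_le_of_lt hle h
  by_contra hn
  push_neg at hn
  have hempty : {e : ℕ∞ | ∃ n : ℕ, e = n ∧ HasResLen R (flatClass R) I n} = ∅ := by
    ext e
    simp only [Set.mem_setOf_eq, Set.mem_empty_iff_false, iff_false]
    rintro ⟨n, rfl, hres⟩
    exact hn n hres
  rw [flatDim, classDim, hempty, sInf_empty] at hlt
  exact absurd hlt (lt_irrefl _)

/-- Restriction of scalars preserves projectivity when the algebra is free. -/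
theorem aux_projective_restrict (R : Type u) [CommRing R] (S : Type u) [Ring S] [Algebra R S]
    [Module.Free R S] (N : Type u) [AddCommGroup N] [Module S N]
    (h : Module.Projective S N) :
    letI := Module.compHom N (algebraMap R S); Module.Projective R N := by
  letI := Module.compHom N (algebraMap R S)
  letI : IsScalarTower R S N :=
    ⟨fun r s n => by rw [Algebra.smul_def, mul_smul]; rfl⟩
  obtain ⟨i, hi⟩ := h
  exact Module.Projective.of_split
    (i.restrictScalars R) ((Finsupp.linearCombination S id).restrictScalars R)
    (LinearMap.ext fun x => hi x)

end AuxRest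

/-- Over a commutative ring `R` with `sfli R < ∞`, every PGF module over the
group ring `R[G]` is PGF as an `R`-module (via restriction of scalars). -/
theorem pgf_restriction_of_sfli_lt_top (R : Type u) [CommRing R] (G : Type u) [Group G]
    (hsfli : sfli R < ⊤)
    (M : Type u) [AddCommGroup M] [Module R M] [Module (MonoidAlgebra R G) M]
    [IsScalarTower R (MonoidAlgebra R G) M]
    (hM : IsPGF (MonoidAlgebra R G) M) :
    IsPGF R M := by
  classical
  set S := MonoidAlgebra R G with hS
  haveI : Module.Free R S := inferInstance
  obtain ⟨P, hproj, hexact, _hinj, ⟨e⟩⟩ := hM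
  letI instRX : ∀ n, Module R (P.X n) := fun n => Module.compHom _ (algebraMap R S)
  letI towerX : ∀ n, IsScalarTower R S (P.X n) :=
    fun n => ⟨fun r s x => by rw [Algebra.smul_def, mul_smul]; rfl⟩
  let P' : ZComplex R := { X := P.X, d := fun n => (P.d n).restrictScalars R }
  have hproj' : ∀ n, Module.Projective R (P.X n) :=
    fun n => aux_projective_restrict R S (P.X n) (hproj n)
  have hexact' : ∀ n, Function.Exact (P'.d (n + 1)) (P'.d n) := fun n => hexact n
  haveI hflat' : ∀ m, Module.Flat R (P'.X m) :=
    fun m => letI := hproj' m; Module.Flat.of_projective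
  refine ⟨P', hproj', hexact', ?_, ?_⟩
  · intro I _ _ hInj n
    letI : Module R I := Module.compHom I (auxOpHom R)
    have hIinj : Module.Injective R I := aux_injective_of_op I hInj
    have hc : ∀ (r : R) (x : I), r • x = MulOpposite.op r • x := fun r x => rfl
    obtain ⟨k, hres⟩ := aux_hasResLen_of_sfli hsfli I hIinj
    have hlt := aux_acyclic_of_hasResLen P' hflat' hexact' k I hres
    exact aux_exact_transfer _ _ _ _
      (auxToTensor R I hc _).toAddMonoidHom (auxToTensor R I hc _).toAddMonoidHom
      (auxToTensor R I hc _).toAddMonoidHom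
      (auxToTensor_surjective R I hc _) (auxToTensor_injective R I hc _)
      (auxToTensor_injective R I hc _)
      (fun a => auxToTensor_natural R I hc (P'.d (n + 1)) a)
      (fun b => auxToTensor_natural R I hc (P'.d n) b)
      (hlt n)
  · have hrange : LinearMap.range (P'.d 0)
        = Submodule.restrictScalars R (LinearMap.range (P.d 0)) := by
      ext x
      simp only [LinearMap.mem_range, Submodule.restrictScalars_mem]
      rfl
    exact ⟨(LinearEquiv.ofEq _ _ hrange).trans
      (((Submodule.restrictScalarsEquiv R S (P.X 0) (LinearMap.range (P.d 0))).restrictScalars R).trans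
        (e.restrictScalars R))⟩
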